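/- There is no computable injective enumeration of infinitely many short programs, where p is short if U(p) is defined and |p| ≤ |q| for every q with U(q) = U(p); equivalently, no computable function enumerates an infinite set S of strings with C(U(p)) = |p| for all p ∈ S. -/

import Mathlib

open MeasureTheory
open scoped ENNReal

/-- The length-`n` initial segment of an infinite binary sequence. -/
def pref (x : ℕ → Bool) (n : ℕ) : List Bool := List.ofFn (fun i : Fin n => x i)

/-- A set of binary strings is prefix-free if no member is a proper prefix of another. -/
def PFree (S : Set (List Bool)) : Prop := ∀ a ∈ S, ∀ b ∈ S, a <+: b → a = b

/-- Kolmogorov complexity of `b` relative to machine `M`: the least length of an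
input mapped by `M` to `b`, `∞` if there is none. -/
noncomputable def Cpx (M : List Bool →. List Bool) (b : List Bool) : ℕ∞ :=
  sInf {n : ℕ∞ | ∃ p : List Bool, b ∈ M p ∧ (p.length : ℕ∞) = n}

/-- A universal machine for plain complexity. -/
def Universal (U : List Bool →. List Bool) : Prop :=
  Partrec U ∧ ∀ L : List Bool →. List Bool, Partrec L →
    ∃ k : ℕ, ∀ b : List Bool, Cpx U b ≤ Cpx L b + (k : ℕ∞)

/-- A prefix-free universal machine: prefix-free domain, universal among machines
with prefix-free domain. -/
def PFUniversal (V : List Bool →. List Bool) : Prop :=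
  Partrec V ∧ PFree {p | (V p).Dom} ∧
    ∀ L : List Bool →. List Bool, Partrec L → PFree {p | (L p).Dom} →
      ∃ k : ℕ, ∀ b : List Bool, Cpx V b ≤ Cpx L b + (k : ℕ∞)

/-- `cyl S` is the set of infinite binary sequences extending some member of `S`. -/
def cyl (S : Set (List Bool)) : Set (ℕ → Bool) := {x | ∃ b ∈ S, pref x b.length = b}

/-- The `e`-th computably enumerable set of binary strings. -/
def W (e : ℕ) : Set (List Bool) :=
  {b | ((Denumerable.ofNat Nat.Partrec.Code e).eval (Encodable.encode b)).Dom}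

/-- The binary-digit expansion of a real number. -/
noncomputable def binSeq (r : ℝ) : ℕ → Bool := fun n => decide (⌊r * 2 ^ (n + 1)⌋ % 2 = 1)

/-- The fair-coin (uniform product) measure on Cantor space, as the pushforward of
Lebesgue measure on `(0,1]` under binary expansion. -/
noncomputable def coin : Measure (ℕ → Bool) :=
  Measure.map binSeq (volume.restrict (Set.Ioc (0 : ℝ) 1))

/-- Martin-Löf test in sense 2. -/
def MLTest (f : ℕ → ℕ) : Prop :=
  Computable f ∧ ∀ n : ℕ, coin (cyl (W (f n))) ≤ (2 : ℝ≥0∞)⁻¹ ^ n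

/-- `x` fails the sense-2 test `f`. -/
def Fails (x : ℕ → Bool) (f : ℕ → ℕ) : Prop := ∀ n : ℕ, x ∈ cyl (W (f n))

/-- Martin-Löf randomness (sense 2). -/
def MLRandom (x : ℕ → Bool) : Prop := ∀ f : ℕ → ℕ, MLTest f → ¬ Fails x f

/-- The dyadic rational value of a finite binary string. -/
noncomputable def sval (b : List Bool) : ℝ :=
  ∑ i : Fin b.length, if b.get i then ((2 : ℝ))⁻¹ ^ (i.val + 1) else 0

/-- Chaitin's halting probability of machine `V`. -/
noncomputable def Omega (V : List Bool →. List Bool) : ℝ :=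
  ∑' p : {p : List Bool // (V p).Dom}, ((2 : ℝ))⁻¹ ^ (p.val.length)

/-- Martin-Löf test in sense 1. -/
def MLTest1 (t : List Bool →. ℕ) : Prop :=
  Partrec t ∧ ∀ m : ℕ, coin (cyl {b | ∃ v ∈ t b, m ≤ v}) ≤ (2 : ℝ≥0∞)⁻¹ ^ m

/-- `x` passes the sense-1 test `t`: the values of `t` on `x`'s prefixes are bounded. -/
def Passes1 (x : ℕ → Bool) (t : List Bool →. ℕ) : Prop :=
  ∃ B : ℕ, ∀ (n : ℕ) (v : ℕ), v ∈ t (pref x n) → v ≤ B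

/-- A set of binary strings is computably enumerable. -/
def CE (S : Set (List Bool)) : Prop :=
  ∃ f : List Bool →. ℕ, Partrec f ∧ S = {b | (f b).Dom}

/-- Decode a list of bits (little-endian) to a natural number. -/
def decBits (l : List Bool) : ℕ := l.foldr (fun b n => Nat.bit b n) 0

lemma decBits_bits (n : ℕ) : decBits n.bits = n := by
  induction n using Nat.binaryRec' with
  | zero => simp [decBits]
  | bit b n h ih =>
      rw [Nat.bits_append_bit n b h]
      show Nat.bit b (decBits n.bits) = Nat.bit b n
      rw [ih]

lemma decBits_primrec : Primrec decBits := by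
  have hstep : Primrec₂ (fun (_ : List Bool) (p : Bool × ℕ) => Nat.bit p.1 p.2) := by
    have : Primrec₂ (fun (_ : List Bool) (p : Bool × ℕ) =>
        cond p.1 (2 * p.2 + 1) (2 * p.2)) := by
      apply Primrec.cond (Primrec.fst.comp Primrec.snd)
      · exact (Primrec.nat_add.comp
          (Primrec.nat_mul.comp (Primrec.const 2) (Primrec.snd.comp Primrec.snd))
          (Primrec.const 1))
      · exact Primrec.nat_mul.comp (Primrec.const 2) (Primrec.snd.comp Primrec.snd)
    exact this.of_eq (by intro a p; cases p.1 <;> simp [Nat.bit])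
  exact (Primrec.list_foldr Primrec.id (Primrec.const 0) hstep :)

lemma cpx_le_of_mem {M : List Bool →. List Bool} {b p : List Bool} (h : b ∈ M p) :
    Cpx M b ≤ (p.length : ℕ∞) :=
  sInf_le ⟨p, h, rfl⟩

lemma le_cpx {M : List Bool →. List Bool} {b : List Bool} {m : ℕ}
    (h : ∀ q : List Bool, b ∈ M q → m ≤ q.length) : (m : ℕ∞) ≤ Cpx M b := by
  refine le_sInf ?_
  rintro n ⟨p, hp, rfl⟩
  exact_mod_cast h p hp

/-- There is no computable injective enumeration of infinitely many short programs. -/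
theorem stmt3 (U : List Bool →. List Bool) (hU : Universal U) :
    ¬ ∃ g : ℕ → List Bool, Computable g ∧ Function.Injective g ∧
        ∀ i : ℕ, ∃ b : List Bool, b ∈ U (g i) ∧
          ∀ q : List Bool, b ∈ U q → (g i).length ≤ q.length := by
  rintro ⟨g, hg, hginj, hshort⟩
  obtain ⟨hUpart, hUuniv⟩ := hU
  -- the lengths of the `g i` are unbounded, since `g` is injective
  have hub : ∀ m : ℕ, ∃ i : ℕ, m ≤ (g i).length := by
    intro m
    by_contra hcon
    push_neg at hcon
    have hsub : Set.range g ⊆ {l : List Bool | l.length < m} := by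
      rintro _ ⟨i, rfl⟩
      exact hcon i
    exact (Set.infinite_range_of_injective hginj)
      ((List.finite_length_lt Bool m).subset hsub)
  -- the machine `L`: on input `p`, search for the first `i` with
  -- `decBits p ≤ (g i).length` and output `U (g i)`
  set P : List Bool → ℕ →. Bool :=
    fun p i => Part.some (decide (decBits p ≤ (g i).length)) with hPdef
  set L : List Bool →. List Bool :=
    fun p => (Nat.rfind (P p)).bind (fun i => U (g i)) with hLdef
  have hLpart : Partrec L := by
    apply Partrec.bind
    · apply Partrec.rfind
      have hc : Computable₂ (fun (p : List Bool) (i : ℕ) =>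
          decide (decBits p ≤ (g i).length)) :=
        Primrec.nat_le.decide.to_comp.comp
          ((decBits_primrec.to_comp).comp Computable.fst)
          (Primrec.list_length.to_comp.comp (hg.comp Computable.snd))
      exact hc.partrec₂
    · exact hUpart.comp (hg.comp Computable.snd)
  obtain ⟨k, hk⟩ := hUuniv L hLpart
  -- for every `m` we get `m ≤ Nat.size m + k`
  have key : ∀ m : ℕ, m ≤ Nat.size m + k := by
    intro m
    obtain ⟨i0, hi0⟩ := hub m
    have hdom : (Nat.rfind (P m.bits)).Dom := by
      refine Nat.rfind_dom.2 ⟨i0, ?_, fun {j} _ => trivial⟩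
      simp [hPdef, decBits_bits, hi0]
    set j : ℕ := (Nat.rfind (P m.bits)).get hdom with hjdef
    have hjmem : j ∈ Nat.rfind (P m.bits) := Part.get_mem hdom
    have hjspec : true ∈ P m.bits j := Nat.rfind_spec hjmem
    have hmj : m ≤ (g j).length := by
      simpa [hPdef, decBits_bits] using hjspec
    obtain ⟨b, hbU, hbmin⟩ := hshort j
    have hbL : b ∈ L m.bits := Part.mem_bind_iff.2 ⟨j, hjmem, hbU⟩
    have h1 : (m : ℕ∞) ≤ Cpx U b :=
      le_cpx fun q hq => le_trans hmj (hbmin q hq)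
    have h2 : Cpx L b ≤ ((m.bits.length : ℕ) : ℕ∞) := cpx_le_of_mem hbL
    have h3 : (m : ℕ∞) ≤ ((m.bits.length + k : ℕ) : ℕ∞) := by
      calc (m : ℕ∞) ≤ Cpx U b := h1
        _ ≤ Cpx L b + (k : ℕ∞) := hk b
        _ ≤ ((m.bits.length : ℕ) : ℕ∞) + (k : ℕ∞) := add_le_add_left h2 _
        _ = ((m.bits.length + k : ℕ) : ℕ∞) := by push_cast; ring
    have h4 : m ≤ m.bits.length + k := by exact_mod_cast h3
    rwa [Nat.size_eq_bits_len] at h4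
  -- contradiction at `m = 2 ^ (k + 2)`
  have hm := key (2 ^ (k + 2))
  rw [Nat.size_pow] at hm
  have hpow : k + 1 ≤ 2 ^ k := Nat.lt_two_pow_self
  have : 2 ^ (k + 2) = 4 * 2 ^ k := by ring
  omega
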